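/- Let G be strongly connected with diameter d and max weight magnitude w_max, and suppose P ∈ Δ_E is ε̃-suboptimal for min_{P ∈ Δ_E} ⟨P,W⟩ + 3 d w_max ‖P𝟏 - Pᵀ𝟏‖₁ (whose optimal value is μ(G)). Then ⟨P,W⟩ ≤ μ(G) + ε̃ and ‖P𝟏 - Pᵀ𝟏‖₁ ≤ ε̃/(d w_max). -/

import Mathlib

open Finset

/-- A directed cycle: a nonempty list of distinct vertices whose consecutive
pairs (cyclically) are edges of `E`. -/
def IsCycle {n : ℕ} (E : Finset (Fin n × Fin n)) (c : List (Fin n)) : Prop :=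
  c ≠ [] ∧ c.Nodup ∧ ∀ p ∈ c.zip (c.rotate 1), p ∈ E

/-- Mean weight of a cycle. -/
noncomputable def meanWeight {n : ℕ} (w : Fin n × Fin n → ℝ) (c : List (Fin n)) : ℝ :=
  ((c.zip (c.rotate 1)).map w).sum / c.length

/-- Min-mean-cycle value of the digraph `(V, E, w)`. -/
noncomputable def mmc {n : ℕ} (E : Finset (Fin n × Fin n)) (w : Fin n × Fin n → ℝ) : ℝ :=
  sInf {x : ℝ | ∃ c, IsCycle E c ∧ meanWeight w c = x}

/-- Membership in `Δ_E`: a nonnegative matrix supported on `E` with total sum 1. -/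
def InDeltaE {n : ℕ} (E : Finset (Fin n × Fin n)) (P : Matrix (Fin n) (Fin n) ℝ) : Prop :=
  (∀ i j, 0 ≤ P i j) ∧ (∀ i j, (i, j) ∉ E → P i j = 0) ∧ (∑ i, ∑ j, P i j) = 1

/-- A circulation: netflow is balanced at every vertex. -/
def IsBalanced {n : ℕ} (P : Matrix (Fin n) (Fin n) ℝ) : Prop :=
  ∀ i, (∑ j, P i j) = ∑ j, P j i

/-- Total netflow imbalance `‖P𝟏 - Pᵀ𝟏‖₁`. -/
noncomputable def imb {n : ℕ} (P : Matrix (Fin n) (Fin n) ℝ) : ℝ :=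
  ∑ i, |(∑ j, P i j) - ∑ j, P j i|

/-- Entrywise ℓ₁ norm of a matrix. -/
noncomputable def l1 {n : ℕ} (P : Matrix (Fin n) (Fin n) ℝ) : ℝ :=
  ∑ i, ∑ j, |P i j|

/-- There is a directed path from `i` to `j` of length at most `d`. -/
def ConnectsWithin {n : ℕ} (E : Finset (Fin n × Fin n)) (d : ℕ) (i j : Fin n) : Prop :=
  ∃ l : List (Fin n), l.length ≤ d ∧ List.Chain (fun a b => (a, b) ∈ E) i l ∧
    (i :: l).getLast (List.cons_ne_nil _ _) = j

/-- A directed walk from `s` to `v` along edges of `E`, recorded by its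
list of vertices after `s`. -/
def IsWalkFrom {n : ℕ} (E : Finset (Fin n × Fin n)) (s v : Fin n) (l : List (Fin n)) : Prop :=
  List.Chain (fun a b => (a, b) ∈ E) s l ∧ (s :: l).getLast (List.cons_ne_nil _ _) = v

/-- Weight of a walk. -/
noncomputable def walkWeight {n : ℕ} (w : Fin n × Fin n → ℝ) (s : Fin n) (l : List (Fin n)) : ℝ :=
  (((s :: l).zip l).map w).sum

noncomputable def listMat {n : ℕ} (L : List (Fin n × Fin n)) : Matrix (Fin n) (Fin n) ℝ :=
  (L.map fun e => Matrix.single e.1 e.2 (1:ℝ)).sum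

lemma listMat_apply {n : ℕ} (L : List (Fin n × Fin n)) (i j : Fin n) :
    listMat L i j = L.count (i, j) := by
  induction L with
  | nil => simp [listMat]
  | cons e L ih =>
    simp only [listMat, List.map_cons, List.sum_cons, List.count_cons] at *
    rw [Matrix.add_apply, ih, Matrix.single]
    by_cases h : (i, j) = e
    · simp [h.symm, Prod.ext_iff, ← h]
      push_cast; ring
    · have : ¬ (e.1 = i ∧ e.2 = j) := by
        rintro ⟨h1, h2⟩; exact h (by rw [Prod.ext_iff]; exact ⟨h1.symm, h2.symm⟩)
      simp [this, h]
      tauto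

lemma listMat_nonneg {n : ℕ} (L : List (Fin n × Fin n)) (i j : Fin n) : 0 ≤ listMat L i j := by
  rw [listMat_apply]; positivity

lemma listMat_eq_zero {n : ℕ} (L : List (Fin n × Fin n)) (i j : Fin n) (h : (i,j) ∉ L) :
    listMat L i j = 0 := by
  rw [listMat_apply]; exact_mod_cast List.count_eq_zero.2 h

lemma listMat_rowsum {n : ℕ} (L : List (Fin n × Fin n)) (v : Fin n) :
    ∑ j, listMat L v j = ((L.map Prod.fst).count v : ℝ) := by
  induction L with
  | nil => simp [listMat]
  | cons e L ih =>
    simp only [listMat, List.map_cons, List.sum_cons] at *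
    simp only [Matrix.add_apply, Finset.sum_add_distrib, ih, List.count_cons]
    have : ∑ j, Matrix.single e.1 e.2 (1:ℝ) v j = if e.1 = v then 1 else 0 := by
      simp [Matrix.single, Finset.sum_ite_eq]
      by_cases h : e.1 = v <;> simp [h, Finset.filter_eq]
    rw [this]; push_cast
    by_cases h : e.1 = v <;> simp [h] <;> ring

lemma listMat_colsum {n : ℕ} (L : List (Fin n × Fin n)) (v : Fin n) :
    ∑ j, listMat L j v = ((L.map Prod.snd).count v : ℝ) := by
  induction L with
  | nil => simp [listMat]
  | cons e L ih =>
    simp only [listMat, List.map_cons, List.sum_cons] at *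
    simp only [Matrix.add_apply, Finset.sum_add_distrib, ih, List.count_cons]
    have : ∑ j, Matrix.single e.1 e.2 (1:ℝ) j v = if e.2 = v then 1 else 0 := by
      simp [Matrix.single, Finset.sum_ite_eq]
      by_cases h : e.2 = v <;> simp [h, Finset.filter_eq]
    rw [this]; push_cast
    by_cases h : e.2 = v <;> simp [h] <;> ring

lemma listMat_total {n : ℕ} (L : List (Fin n × Fin n)) :
    ∑ i, ∑ j, listMat L i j = L.length := by
  induction L with
  | nil => simp [listMat]
  | cons e L ih =>
    simp only [listMat, List.map_cons, List.sum_cons] at *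
    simp only [Matrix.add_apply, Finset.sum_add_distrib, ih]
    have : ∑ i, ∑ j, Matrix.single e.1 e.2 (1:ℝ) i j = 1 := by
      simp [Matrix.single, ite_and, Finset.sum_ite_eq]
    rw [this]; simp; ring

lemma listMat_weight {n : ℕ} (L : List (Fin n × Fin n)) (w : Fin n × Fin n → ℝ) :
    ∑ i, ∑ j, listMat L i j * w (i, j) = (L.map w).sum := by
  induction L with
  | nil => simp [listMat]
  | cons e L ih =>
    simp only [listMat, List.map_cons, List.sum_cons] at *
    simp only [Matrix.add_apply, add_mul, Finset.sum_add_distrib, ih]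
    have : ∑ i, ∑ j, Matrix.single e.1 e.2 (1:ℝ) i j * w (i,j) = w e := by
      simp [Matrix.single, ite_and, ite_mul, Finset.sum_ite_eq]
    rw [this]

def walkEdges {n : ℕ} : Fin n → List (Fin n) → List (Fin n × Fin n)
  | _, [] => []
  | s, a :: l => (s, a) :: walkEdges a l

lemma walkEdges_length {n : ℕ} (s : Fin n) (l : List (Fin n)) :
    (walkEdges s l).length = l.length := by
  induction l generalizing s with
  | nil => rfl
  | cons a l ih => simp [walkEdges, ih]

lemma walkEdges_mem_E {n : ℕ} {E : Finset (Fin n × Fin n)} {s : Fin n} {l : List (Fin n)}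
    (h : List.Chain (fun a b => (a, b) ∈ E) s l) :
    ∀ e ∈ walkEdges s l, e ∈ E := by
  induction l generalizing s with
  | nil => simp [walkEdges]
  | cons a l ih =>
    simp only [List.Chain, List.chain_cons] at h
    intro e he
    rcases List.mem_cons.1 he with he | he
    · exact he ▸ h.1
    · exact ih h.2 e he
  
lemma walkEdges_netflow {n : ℕ} (s : Fin n) (l : List (Fin n)) (v : Fin n) :
    (∑ j, listMat (walkEdges s l) v j) - (∑ j, listMat (walkEdges s l) j v)
      = (if v = s then 1 else 0) - (if v = ((s :: l).getLast (List.cons_ne_nil _ _)) then 1 else 0) := by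
  induction l generalizing s with
  | nil => simp [walkEdges, listMat]; by_cases h : v = s <;> simp [h]
  | cons a l ih =>
    have hlast : ((s :: a :: l).getLast (List.cons_ne_nil _ _))
        = ((a :: l).getLast (List.cons_ne_nil _ _)) := List.getLast_cons _
    have expand : ∀ i j : Fin n, listMat (walkEdges s (a :: l)) i j
        = Matrix.single s a (1:ℝ) i j + listMat (walkEdges a l) i j := by
      intro i j; simp [walkEdges, listMat]
    simp only [expand, Finset.sum_add_distrib, hlast]
    have h1 : ∑ j, Matrix.single s a (1:ℝ) v j = if v = s then 1 else 0 := by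
      simp [Matrix.single, ite_and, Finset.sum_ite_eq, eq_comm]
    have h2 : ∑ j, Matrix.single s a (1:ℝ) j v = if v = a then 1 else 0 := by
      simp only [Matrix.single, ite_and, Finset.sum_ite_eq', eq_comm]
      by_cases h : v = a <;> simp [h, eq_comm, Finset.filter_eq]
    have := ih a
    rw [h1, h2]
    linarith [ih a]

lemma exists_pos_of_sum_pos {n : ℕ} {f : Fin n → ℝ} (h : 0 < ∑ j, f j) : ∃ j, 0 < f j := by
  by_contra hc
  push_neg at hc
  have : ∑ j, f j ≤ 0 := Finset.sum_nonpos fun j _ => hc j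
  linarith

lemma exists_cycle_support {n : ℕ} (F : Matrix (Fin n) (Fin n) ℝ)
    (hpos : ∀ i j, 0 ≤ F i j) (hbal : IsBalanced F)
    {i0 j0 : Fin n} (h0 : 0 < F i0 j0) :
    ∃ cl : List (Fin n), cl ≠ [] ∧ cl.Nodup ∧
      ∀ p ∈ cl.zip (cl.rotate 1), 0 < F p.1 p.2 := by
  classical
  set g : Fin n → Fin n := fun i => if h : ∃ j, 0 < F i j then h.choose else i with hgdef
  have hg : ∀ i, (∃ j, 0 < F i j) → 0 < F i (g i) := by
    intro i h
    simp only [hgdef, dif_pos h]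
    exact h.choose_spec
  have hstep : ∀ i, (∃ j, 0 < F i j) → (∃ j, 0 < F (g i) j) := by
    intro i h
    apply exists_pos_of_sum_pos
    rw [hbal (g i)]
    exact Finset.sum_pos' (fun j _ => hpos j (g i)) ⟨i, Finset.mem_univ i, hg i h⟩
  have hGood : ∀ k, ∃ j, 0 < F (g^[k] i0) j := by
    intro k
    induction k with
    | zero => exact ⟨j0, h0⟩
    | succ k ih => rw [Function.iterate_succ_apply']; exact hstep _ ih
  have hph := Finset.exists_ne_map_eq_of_card_lt_of_maps_to
    (s := Finset.range (n+1)) (t := (Finset.univ : Finset (Fin n)))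
    (f := fun a => g^[a] i0) (by simp) (fun a _ => Finset.mem_univ _)
  obtain ⟨a, -, b, -, hab, heq⟩ := hph
  have hex : ∃ l, ∃ k, k < l ∧ g^[l] i0 = g^[k] i0 := by
    rcases lt_or_gt_of_ne hab with h | h
    · exact ⟨b, a, h, heq.symm⟩
    · exact ⟨a, b, h, heq⟩
  set L := Nat.find hex with hL
  obtain ⟨k, hkL, hrep⟩ := Nat.find_spec hex
  set m := L - k with hm
  have hmpos : 0 < m := Nat.sub_pos_of_lt hkL
  have hkm : k + m = L := by omega
  have hinj : ∀ t1 t2, t1 < m → t2 < m → g^[k + t1] i0 = g^[k + t2] i0 → t1 = t2 := by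
    intro t1 t2 h1 h2 he
    by_contra hne
    rcases lt_or_gt_of_ne hne with h | h
    · exact Nat.find_min hex (by omega : k + t2 < L) ⟨k + t1, by omega, he.symm⟩
    · exact Nat.find_min hex (by omega : k + t1 < L) ⟨k + t2, by omega, he⟩
  set cl : List (Fin n) := (List.range m).map (fun t => g^[k + t] i0) with hc
  have hclen : cl.length = m := by simp [hc]
  refine ⟨cl, ?_, ?_, ?_⟩
  · intro hnil
    have := congrArg List.length hnil
    rw [hclen] at this
    simp at this
    omega
  · apply List.Nodup.map_on
    · intro t1 h1 t2 h2 he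
      exact hinj t1 t2 (List.mem_range.1 h1) (List.mem_range.1 h2) he
    · exact List.nodup_range
  · intro p hp
    have hzlen : (cl.zip (cl.rotate 1)).length = m := by
      simp [List.length_zip, List.length_rotate, hclen]
    obtain ⟨i, hi, hgot⟩ := List.mem_iff_getElem.1 hp
    have him : i < m := hzlen ▸ hi
    have hic : i < cl.length := by omega
    have hir : i < (cl.rotate 1).length := by rw [List.length_rotate]; omega
    have hmod : (i + 1) % m < m := Nat.mod_lt _ hmpos
    have hmodc : (i + 1) % m < cl.length := by omega
    have hget : ∀ (t : ℕ) (ht : t < cl.length), cl[t] = g^[k + t] i0 := by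
      intro t ht
      simp [hc]
    have h1 : (cl.zip (cl.rotate 1))[i] = (cl[i], (cl.rotate 1)[i]) := List.getElem_zip
    have h2 : (cl.rotate 1)[i] = cl[(i + 1) % m] := by
      rw [List.getElem_rotate]
      congr 1
      rw [hclen]
    have h3 : cl[(i + 1) % m] = g^[k + i + 1] i0 := by
      rw [hget _ hmodc]
      rcases Nat.lt_or_ge (i + 1) m with h | h
      · rw [Nat.mod_eq_of_lt h, ← Nat.add_assoc]
      · have him' : i + 1 = m := by omega
        rw [him', Nat.mod_self, Nat.add_zero]
        have hL' : k + i + 1 = L := by omega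
        rw [hL', hrep]
    rw [← hgot, h1, h2, h3, hget i hic, Function.iterate_succ_apply']
    exact hg _ (hGood (k + i))

lemma list_abs_sum_le (l : List ℝ) : |l.sum| ≤ (l.map abs).sum := by
  induction l with
  | nil => simp
  | cons x l ihl =>
    simp only [List.sum_cons, List.map_cons]
    calc |x + l.sum| ≤ |x| + |l.sum| := abs_add_le _ _
    _ ≤ |x| + (l.map abs).sum := by linarith

lemma count_nodup_cast {α : Type*} [BEq α] [LawfulBEq α] {l : List α} (hl : l.Nodup) (a : α) :
    ((l.count a : ℕ) : ℝ) = if a ∈ l then 1 else 0 := by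
  induction l with
  | nil => simp
  | cons x l ihl =>
    rw [List.nodup_cons] at hl
    rw [List.count_cons]
    push_cast
    rw [ihl hl.2]
    by_cases hax : a = x
    · subst hax
      simp [hl.1]
    · simp [hax, Ne.symm hax, List.mem_cons]

lemma meanWeight_abs_le {n : ℕ} {E : Finset (Fin n × Fin n)} {w : Fin n × Fin n → ℝ}
    {wmax : ℝ} (hw : ∀ e ∈ E, |w e| ≤ wmax) {cl : List (Fin n)} (hcl : IsCycle E cl) :
    |meanWeight w cl| ≤ wmax := by
  obtain ⟨hne, -, hmem⟩ := hcl
  set Lz := cl.zip (cl.rotate 1) with hLz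
  have hlen : Lz.length = cl.length := by
    simp [hLz, List.length_zip, List.length_rotate]
  have hlpos : 0 < (cl.length : ℝ) := by
    have := List.length_pos_iff.2 hne
    exact_mod_cast this
  have habs : |(Lz.map w).sum| ≤ cl.length * wmax := by
    calc |(Lz.map w).sum| ≤ ((Lz.map w).map abs).sum := list_abs_sum_le _
    _ ≤ ((Lz.map w).map abs).length • wmax := by
        apply List.sum_le_card_nsmul
        intro x hx
        simp only [List.map_map, List.mem_map] at hx
        obtain ⟨e, he, rfl⟩ := hx
        exact hw e (hmem e he)
    _ = cl.length * wmax := by simp [hlen, nsmul_eq_mul]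
  rw [meanWeight, abs_div, abs_of_pos hlpos, div_le_iff₀ hlpos]
  calc |(Lz.map w).sum| ≤ cl.length * wmax := habs
  _ = wmax * cl.length := by ring

lemma mmc_le_meanWeight {n : ℕ} {E : Finset (Fin n × Fin n)} {w : Fin n × Fin n → ℝ}
    {wmax : ℝ} (hw : ∀ e ∈ E, |w e| ≤ wmax) {cl : List (Fin n)} (hcl : IsCycle E cl) :
    mmc E w ≤ meanWeight w cl := by
  apply csInf_le
  · refine ⟨-wmax, ?_⟩
    rintro x ⟨cl', hcl', rfl⟩
    exact neg_le_of_abs_le (meanWeight_abs_le hw hcl')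
  · exact ⟨cl, hcl, rfl⟩

lemma neg_wmax_le_mmc {n : ℕ} {E : Finset (Fin n × Fin n)} {w : Fin n × Fin n → ℝ}
    {wmax : ℝ} (hw : ∀ e ∈ E, |w e| ≤ wmax) (hcyc : ∃ cl, IsCycle E cl) :
    -wmax ≤ mmc E w := by
  obtain ⟨cl0, hcl0⟩ := hcyc
  refine le_csInf ⟨meanWeight w cl0, ⟨cl0, hcl0, rfl⟩⟩ ?_
  rintro x ⟨cl', hcl', rfl⟩
  exact neg_le_of_abs_le (meanWeight_abs_le hw hcl')

lemma circ_lb_aux {n : ℕ} (E : Finset (Fin n × Fin n)) (w : Fin n × Fin n → ℝ)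
    (wmax : ℝ) (hw : ∀ e ∈ E, |w e| ≤ wmax) :
    ∀ N (F : Matrix (Fin n) (Fin n) ℝ),
    (Finset.univ.filter (fun p : Fin n × Fin n => F p.1 p.2 ≠ 0)).card ≤ N →
    (∀ i j, 0 ≤ F i j) → (∀ i j, (i, j) ∉ E → F i j = 0) → IsBalanced F →
    mmc E w * (∑ i, ∑ j, F i j) ≤ ∑ i, ∑ j, F i j * w (i, j) := by
  intro N
  induction N with
  | zero =>
    intro F hcard hpos hsupp hbal
    have hF0 : ∀ i j, F i j = 0 := by
      intro i j
      by_contra h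
      have : (i, j) ∈ Finset.univ.filter (fun p : Fin n × Fin n => F p.1 p.2 ≠ 0) := by
        simp [h]
      have := Finset.card_pos.2 ⟨_, this⟩
      omega
    simp [hF0]
  | succ N ih =>
    intro F hcard hpos hsupp hbal
    by_cases hF0 : ∀ i j, F i j = 0
    · simp [hF0]
    push_neg at hF0
    obtain ⟨i0, j0, h00⟩ := hF0
    have h0 : 0 < F i0 j0 := lt_of_le_of_ne (hpos i0 j0) (Ne.symm h00)
    obtain ⟨cl, hne, hnodup, hposE⟩ := exists_cycle_support F hpos hbal h0
    set Lz := cl.zip (cl.rotate 1) with hLz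
    have hLzE : ∀ e ∈ Lz, e ∈ E := by
      intro e he
      by_contra hc
      have := hsupp e.1 e.2 (by simpa using hc)
      have := hposE e he
      simp_all
    have hcycle : IsCycle E cl := ⟨hne, hnodup, hLzE⟩
    have hlenz : Lz.length = cl.length := by
      simp [hLz, List.length_zip, List.length_rotate]
    have hclpos : 0 < cl.length := List.length_pos_iff.2 hne
    have hLzne : Lz ≠ [] := by
      intro h
      rw [h] at hlenz
      simp at hlenz
      omega
    -- minimal edge
    have htne : Lz.toFinset.Nonempty := by
      obtain ⟨e, he⟩ := List.exists_mem_of_ne_nil Lz hLzne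
      exact ⟨e, List.mem_toFinset.2 he⟩
    obtain ⟨e0, he0t, he0min⟩ := Finset.exists_min_image Lz.toFinset (fun e => F e.1 e.2) htne
    have he0 : e0 ∈ Lz := List.mem_toFinset.1 he0t
    set lam := F e0.1 e0.2 with hlamdef
    have hlam : 0 < lam := hposE e0 he0
    have hmin : ∀ e ∈ Lz, lam ≤ F e.1 e.2 := fun e he => he0min e (List.mem_toFinset.2 he)
    -- Lz is nodup
    have hmapfst : Lz.map Prod.fst = cl :=
      List.map_fst_zip (by rw [List.length_rotate])
    have hmapsnd : Lz.map Prod.snd = cl.rotate 1 :=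
      List.map_snd_zip (by rw [List.length_rotate])
    have hLznd : Lz.Nodup := List.Nodup.of_map Prod.fst (hmapfst ▸ hnodup)
    have hcount : ∀ i j : Fin n, (Lz.count (i, j) : ℝ) = if (i, j) ∈ Lz then 1 else 0 := by
      intro i j
      exact count_nodup_cast hLznd (i, j)
    set F' : Matrix (Fin n) (Fin n) ℝ :=
      fun i j => F i j - lam * listMat Lz i j with hF'
    have hF'app : ∀ i j, F' i j = F i j - lam * (if (i, j) ∈ Lz then 1 else 0) := by
      intro i j
      have hrfl : F' i j = F i j - lam * listMat Lz i j := rfl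
      rw [hrfl, listMat_apply, hcount]
    have hF'pos : ∀ i j, 0 ≤ F' i j := by
      intro i j
      rw [hF'app]
      by_cases h : (i, j) ∈ Lz
      · simp only [h, if_true, mul_one]
        have := hmin (i, j) h
        linarith
      · simp [h, hpos i j]
    have hF'supp : ∀ i j, (i, j) ∉ E → F' i j = 0 := by
      intro i j hij
      have h1 : F i j = 0 := hsupp i j hij
      have h2 : (i, j) ∉ Lz := fun h => hij (hLzE _ h)
      rw [hF'app, h1]
      simp [h2]
    have hF'bal : IsBalanced F' := by
      intro v
      simp only [hF', Finset.sum_sub_distrib, ← Finset.mul_sum]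
      rw [listMat_rowsum, listMat_colsum, hmapfst, hmapsnd,
        List.Perm.count_eq (List.rotate_perm cl 1)]
      rw [hbal v]
    have hsub : (Finset.univ.filter (fun p : Fin n × Fin n => F' p.1 p.2 ≠ 0)) ⊂
        (Finset.univ.filter (fun p : Fin n × Fin n => F p.1 p.2 ≠ 0)) := by
      constructor
      · intro p hp
        simp only [Finset.mem_filter, Finset.mem_univ, true_and] at hp ⊢
        intro hFp
        apply hp
        rw [hF'app, hFp]
        have : (p.1, p.2) ∉ Lz := by
          intro h
          have := hposE _ h
          rw [hFp] at this
          exact lt_irrefl _ this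
        simp [this]
      · intro hss
        have he0mem : e0 ∈ Finset.univ.filter (fun p : Fin n × Fin n => F p.1 p.2 ≠ 0) := by
          simp [hlam.ne', ← hlamdef]
        have := hss he0mem
        simp only [Finset.mem_filter, Finset.mem_univ, true_and] at this
        apply this
        rw [hF'app]
        simp only [Prod.mk.eta, he0, if_true, mul_one]
        rw [← hlamdef]
        ring
    have hcard' : (Finset.univ.filter (fun p : Fin n × Fin n => F' p.1 p.2 ≠ 0)).card ≤ N := by
      have := Finset.card_lt_card hsub
      omega
    have hIH := ih F' hcard' hF'pos hF'supp hF'bal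
    -- sum identities
    have hsum : (∑ i, ∑ j, F i j) = (∑ i, ∑ j, F' i j) + lam * Lz.length := by
      have h1 : ∑ i, ∑ j, F' i j
          = (∑ i, ∑ j, F i j) - lam * ∑ i, ∑ j, listMat Lz i j := by
        simp only [hF', Finset.sum_sub_distrib, ← Finset.mul_sum]
      rw [h1, listMat_total]
      ring
    have hwsum : (∑ i, ∑ j, F i j * w (i, j))
        = (∑ i, ∑ j, F' i j * w (i, j)) + lam * (Lz.map w).sum := by
      have h1 : ∑ i, ∑ j, F' i j * w (i, j)
          = (∑ i, ∑ j, F i j * w (i, j)) - lam * ∑ i, ∑ j, listMat Lz i j * w (i, j) := by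
        simp only [hF', sub_mul, Finset.sum_sub_distrib, mul_assoc, ← Finset.mul_sum]
      rw [h1, listMat_weight]
      ring
    have hmw : (Lz.map w).sum = cl.length * meanWeight w cl := by
      rw [meanWeight]
      field_simp
      rfl
    have hmmc := mmc_le_meanWeight hw hcycle
    rw [hsum, hwsum, hmw, mul_add]
    have hcast : ((Lz.length : ℕ) : ℝ) = ((cl.length : ℕ) : ℝ) := by rw [hlenz]
    rw [hcast]
    have h1 : mmc E w * (lam * (cl.length : ℝ)) ≤ lam * ((cl.length : ℝ) * meanWeight w cl) := by
      calc mmc E w * (lam * (cl.length : ℝ))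
          ≤ meanWeight w cl * (lam * (cl.length : ℝ)) :=
            mul_le_mul_of_nonneg_right hmmc (by positivity)
        _ = lam * ((cl.length : ℝ) * meanWeight w cl) := by ring
    linarith [hIH, h1]

/-- **Near-optimality for the penalized problem gives near-optimality and
near-feasibility for MMC.** If `P ∈ Δ_E` is `ε̃`-suboptimal for
`min_{P ∈ Δ_E} ⟨P,W⟩ + 3 d w_max ‖P𝟏 - Pᵀ𝟏‖₁` (whose optimal value is `μ(G)`),
then `⟨P,W⟩ ≤ μ(G) + ε̃` and `‖P𝟏 - Pᵀ𝟏‖₁ ≤ ε̃/(d w_max)`. -/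
theorem penalized_suboptimal {n : ℕ} (E : Finset (Fin n × Fin n))
    (w : Fin n × Fin n → ℝ) (d : ℕ) (wmax ε' : ℝ)
    (hconn : ∀ i j : Fin n, ConnectsWithin E d i j)
    (hcyc : ∃ c, IsCycle E c)
    (hw : ∀ e ∈ E, |w e| ≤ wmax) (hwmax : 0 < wmax)
    (P : Matrix (Fin n) (Fin n) ℝ) (hP : InDeltaE E P)
    (hsub : (∑ i, ∑ j, P i j * w (i, j)) + 3 * d * wmax * imb P ≤ mmc E w + ε') :
    (∑ i, ∑ j, P i j * w (i, j)) ≤ mmc E w + ε' ∧ imb P ≤ ε' / (d * wmax) := by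
  classical
  obtain ⟨hPpos, hPsupp, hPsum⟩ := hP
  have himb : 0 ≤ imb P := Finset.sum_nonneg fun _ _ => abs_nonneg _
  have hd0 : (0:ℝ) ≤ 3 * d * wmax * imb P := by positivity
  refine ⟨by linarith, ?_⟩
  have hn : 0 < n := by
    rcases Nat.eq_zero_or_pos n with h | h
    · subst h; simp at hPsum
    · exact h
  set v0 : Fin n := ⟨0, hn⟩ with hv0
  set bb : Fin n → ℝ := fun i => (∑ j, P i j) - ∑ j, P j i with hbb
  have hbsum : ∑ i, bb i = 0 := by
    simp only [hbb, Finset.sum_sub_distrib]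
    rw [Finset.sum_comm]
    ring
  have himbeq : imb P = ∑ i, |bb i| := rfl
  choose l1 hl1len hl1ch hl1last using fun i => hconn v0 i
  choose l2 hl2len hl2ch hl2last using fun i => hconn i v0
  set M : Matrix (Fin n) (Fin n) ℝ :=
    ∑ i, ((max (bb i) 0) • listMat (walkEdges v0 (l1 i))
      + (max (-(bb i)) 0) • listMat (walkEdges i (l2 i))) with hM
  have hMapp : ∀ x y, M x y = ∑ i, ((max (bb i) 0) * listMat (walkEdges v0 (l1 i)) x y
      + (max (-(bb i)) 0) * listMat (walkEdges i (l2 i)) x y) := by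
    intro x y
    rw [hM, Matrix.sum_apply]
    apply Finset.sum_congr rfl
    intro i _
    simp [Matrix.add_apply, Matrix.smul_apply, smul_eq_mul]
  have hMpos : ∀ x y, 0 ≤ M x y := by
    intro x y
    rw [hMapp]
    apply Finset.sum_nonneg
    intro i _
    have := listMat_nonneg (walkEdges v0 (l1 i)) x y
    have := listMat_nonneg (walkEdges i (l2 i)) x y
    positivity
  have hMsupp : ∀ x y, (x, y) ∉ E → M x y = 0 := by
    intro x y hxy
    rw [hMapp]
    apply Finset.sum_eq_zero
    intro i _
    have h1 : listMat (walkEdges v0 (l1 i)) x y = 0 := by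
      apply listMat_eq_zero
      intro hmem
      exact hxy (walkEdges_mem_E (hl1ch i) _ hmem)
    have h2 : listMat (walkEdges i (l2 i)) x y = 0 := by
      apply listMat_eq_zero
      intro hmem
      exact hxy (walkEdges_mem_E (hl2ch i) _ hmem)
    rw [h1, h2]
    ring
  have hnet : ∀ v, (∑ y, M v y) - (∑ y, M y v) = - bb v := by
    intro v
    have hrow : ∑ y, M v y = ∑ i, ((max (bb i) 0) * ∑ y, listMat (walkEdges v0 (l1 i)) v y
        + (max (-(bb i)) 0) * ∑ y, listMat (walkEdges i (l2 i)) v y) := by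
      simp only [hMapp]
      rw [Finset.sum_comm]
      simp [Finset.sum_add_distrib, Finset.mul_sum]
    have hcol : ∑ y, M y v = ∑ i, ((max (bb i) 0) * ∑ y, listMat (walkEdges v0 (l1 i)) y v
        + (max (-(bb i)) 0) * ∑ y, listMat (walkEdges i (l2 i)) y v) := by
      simp only [hMapp]
      rw [Finset.sum_comm]
      simp [Finset.sum_add_distrib, Finset.mul_sum]
    rw [hrow, hcol, ← Finset.sum_sub_distrib]
    have hterm : ∀ i, ((max (bb i) 0) * ∑ y, listMat (walkEdges v0 (l1 i)) v y
        + (max (-(bb i)) 0) * ∑ y, listMat (walkEdges i (l2 i)) v y)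
        - ((max (bb i) 0) * ∑ y, listMat (walkEdges v0 (l1 i)) y v
        + (max (-(bb i)) 0) * ∑ y, listMat (walkEdges i (l2 i)) y v)
        = bb i * ((if v = v0 then 1 else 0) - (if v = i then 1 else 0)) := by
      intro i
      have h1 := walkEdges_netflow v0 (l1 i) v
      rw [hl1last i] at h1
      have h2 := walkEdges_netflow i (l2 i) v
      rw [hl2last i] at h2
      have hpm : max (bb i) 0 - max (-(bb i)) 0 = bb i := by
        rcases le_total (bb i) 0 with h | h
        · rw [max_eq_right h, max_eq_left (by linarith)]; ring
        · rw [max_eq_left h, max_eq_right (by linarith)]; ring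
      linear_combination (max (bb i) 0) * h1 + (max (-(bb i)) 0) * h2
        + ((if v = v0 then (1:ℝ) else 0) - (if v = i then 1 else 0)) * hpm
    rw [Finset.sum_congr rfl (fun i _ => hterm i)]
    have e1 : ∑ i, bb i * ((if v = v0 then (1:ℝ) else 0) - (if v = i then 1 else 0))
        = (∑ i, bb i) * (if v = v0 then (1:ℝ) else 0) - bb v := by
      simp only [mul_sub, Finset.sum_sub_distrib, ← Finset.sum_mul]
      congr 1
      simp [mul_ite, Finset.sum_ite_eq]
    rw [e1, hbsum]
    ring
  set σ : ℝ := ∑ x, ∑ y, M x y with hσ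
  have hσ0 : 0 ≤ σ := Finset.sum_nonneg fun x _ => Finset.sum_nonneg fun y _ => hMpos x y
  have habs : ∀ a : ℝ, max a 0 + max (-a) 0 = |a| := by
    intro a
    rcases le_total a 0 with h | h
    · rw [max_eq_right h, max_eq_left (by linarith), abs_of_nonpos h]; ring
    · rw [max_eq_left h, max_eq_right (by linarith), abs_of_nonneg h]; ring
  have hσd : σ ≤ d * imb P := by
    have step1 : σ = ∑ i, ((max (bb i) 0) * (l1 i).length
        + (max (-(bb i)) 0) * (l2 i).length) := by
      rw [hσ]
      calc ∑ x, ∑ y, M x y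
          = ∑ x, ∑ i, ((max (bb i) 0) * ∑ y, listMat (walkEdges v0 (l1 i)) x y
            + (max (-(bb i)) 0) * ∑ y, listMat (walkEdges i (l2 i)) x y) := by
            apply Finset.sum_congr rfl
            intro x _
            simp only [hMapp]
            rw [Finset.sum_comm]
            simp [Finset.sum_add_distrib, Finset.mul_sum]
        _ = ∑ i, ((max (bb i) 0) * ∑ x, ∑ y, listMat (walkEdges v0 (l1 i)) x y
            + (max (-(bb i)) 0) * ∑ x, ∑ y, listMat (walkEdges i (l2 i)) x y) := by
            rw [Finset.sum_comm]
            apply Finset.sum_congr rfl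
            intro i _
            simp [Finset.sum_add_distrib, Finset.mul_sum]
        _ = ∑ i, ((max (bb i) 0) * (l1 i).length + (max (-(bb i)) 0) * (l2 i).length) := by
            apply Finset.sum_congr rfl
            intro i _
            rw [listMat_total, listMat_total, walkEdges_length, walkEdges_length]
    rw [step1, himbeq, Finset.mul_sum]
    apply Finset.sum_le_sum
    intro i _
    have hp : 0 ≤ max (bb i) 0 := le_max_right _ _
    have hm : 0 ≤ max (-(bb i)) 0 := le_max_right _ _
    have hl1 : ((l1 i).length : ℝ) ≤ d := by exact_mod_cast hl1len i
    have hl2 : ((l2 i).length : ℝ) ≤ d := by exact_mod_cast hl2len i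
    calc (max (bb i) 0) * (l1 i).length + (max (-(bb i)) 0) * (l2 i).length
        ≤ (max (bb i) 0) * d + (max (-(bb i)) 0) * d := by
          apply add_le_add
          · exact mul_le_mul_of_nonneg_left hl1 hp
          · exact mul_le_mul_of_nonneg_left hl2 hm
      _ = (d : ℝ) * |bb i| := by rw [← habs (bb i)]; ring
  -- the repaired flow
  set F : Matrix (Fin n) (Fin n) ℝ := fun x y => P x y + M x y with hF
  have hFpos : ∀ x y, 0 ≤ F x y := fun x y => add_nonneg (hPpos x y) (hMpos x y)
  have hFsupp : ∀ x y, (x, y) ∉ E → F x y = 0 := by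
    intro x y h
    have : F x y = P x y + M x y := rfl
    rw [this, hPsupp x y h, hMsupp x y h]
    ring
  have hFbal : IsBalanced F := by
    intro v
    have h1 : ∑ y, F v y = (∑ y, P v y) + ∑ y, M v y := by
      simp [hF, Finset.sum_add_distrib]
    have h2 : ∑ y, F y v = (∑ y, P y v) + ∑ y, M y v := by
      simp [hF, Finset.sum_add_distrib]
    have h3 := hnet v
    have h4 : bb v = (∑ y, P v y) - ∑ y, P y v := rfl
    rw [h1, h2]
    linarith
  have hFtot : ∑ x, ∑ y, F x y = 1 + σ := by
    have : ∀ x, ∑ y, F x y = (∑ y, P x y) + ∑ y, M x y := by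
      intro x; simp [hF, Finset.sum_add_distrib]
    rw [Finset.sum_congr rfl (fun x _ => this x), Finset.sum_add_distrib, hPsum, hσ]
  have hFw : ∑ x, ∑ y, F x y * w (x, y)
      = (∑ x, ∑ y, P x y * w (x, y)) + ∑ x, ∑ y, M x y * w (x, y) := by
    have : ∀ x, ∑ y, F x y * w (x, y)
        = (∑ y, P x y * w (x, y)) + ∑ y, M x y * w (x, y) := by
      intro x
      simp [hF, add_mul, Finset.sum_add_distrib]
    rw [Finset.sum_congr rfl (fun x _ => this x), Finset.sum_add_distrib]
  have hMw : ∑ x, ∑ y, M x y * w (x, y) ≤ wmax * σ := by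
    have : ∀ x y, M x y * w (x, y) ≤ M x y * wmax := by
      intro x y
      by_cases h : (x, y) ∈ E
      · exact mul_le_mul_of_nonneg_left (le_of_abs_le (hw _ h)) (hMpos x y)
      · rw [hMsupp x y h]; simp
    calc ∑ x, ∑ y, M x y * w (x, y) ≤ ∑ x, ∑ y, M x y * wmax :=
          Finset.sum_le_sum fun x _ => Finset.sum_le_sum fun y _ => this x y
      _ = wmax * σ := by rw [hσ, Finset.mul_sum]; congr 1; funext x; rw [← Finset.sum_mul, mul_comm]
  have hcirc := circ_lb_aux E w wmax hw
    ((Finset.univ.filter (fun p : Fin n × Fin n => F p.1 p.2 ≠ 0)).card) F le_rfl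
    hFpos hFsupp hFbal
  rw [hFtot, hFw] at hcirc
  have hmmclb := neg_wmax_le_mmc hw hcyc
  have hKEY : mmc E w ≤ (∑ i, ∑ j, P i j * w (i, j)) + 2 * d * wmax * imb P := by
    have k1 : 0 ≤ (mmc E w + wmax) * σ := mul_nonneg (by linarith) hσ0
    have k2 : wmax * σ ≤ wmax * (d * imb P) := mul_le_mul_of_nonneg_left hσd hwmax.le
    have e : mmc E w * (1 + σ) = mmc E w + mmc E w * σ := by ring
    have e2 : (mmc E w + wmax) * σ = mmc E w * σ + wmax * σ := by ring
    nlinarith [hcirc, hMw, k1, k2, e, e2]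
  rcases Nat.eq_zero_or_pos d with hd | hd
  · subst hd
    have hallEq : ∀ i j : Fin n, i = j := by
      intro i j
      obtain ⟨l, hlen, -, hlast⟩ := hconn i j
      have hl : l = [] := List.eq_nil_of_length_eq_zero (Nat.le_zero.1 hlen)
      subst hl
      have := hlast
      simp at this
      exact this
    have himb0 : imb P = 0 := by
      rw [himbeq]
      apply Finset.sum_eq_zero
      intro i _
      have : ∀ j : Fin n, P i j = P j i := by
        intro j
        have h := hallEq i j
        rw [h]
      have : bb i = 0 := by
        simp only [hbb]
        rw [Finset.sum_congr rfl (fun j _ => this j)]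
        ring
      rw [this, abs_zero]
    rw [himb0]
    simp
  · have hdw : (0:ℝ) < (d : ℝ) * wmax := by
      apply mul_pos _ hwmax
      exact_mod_cast hd
    rw [le_div_iff₀ hdw]
    nlinarith [hsub, hKEY, himb]
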